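/- Let H be a Hilbert space, F and F₁ self-adjoint operators, c > 0 and 0 < ε < 1 with ‖F − F₁‖ < cε. Suppose u is a unit eigenvector of F₁ with eigenvalue λ, |λ| < c, and u = u′ + u″ where u′ lies in an F-invariant closed subspace V_F, u″ ⊥ V_F, and ‖F(w)‖ ≥ 3c‖w‖ for all w ⊥ V_F, while V_F and its orthogonal complement are both F-invariant. Then ‖u″‖ < ε/2. -/

import Mathlib

/-- Quantitative continuity of spectral subspaces: if `‖F − F₁‖ < cε`, `u` is a
unit eigenvector of `F₁` with eigenvalue `λ`, `|λ| < c`, and `u = u′ + u″` with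
`u′` in an `F`-invariant subspace `V_F` (whose orthogonal complement is also
`F`-invariant and on which `‖F w‖ ≥ 3c‖w‖`), `u″ ⊥ V_F`, then `‖u″‖ < ε/2`. -/
theorem eigenvector_close_to_spectral_subspace
    {H : Type*} [NormedAddCommGroup H] [InnerProductSpace ℝ H]
    (F F₁ : H →L[ℝ] H) (c eps : ℝ)
    (hc : 0 < c) (heps0 : 0 < eps) (heps1 : eps < 1)
    (hFF₁ : ‖F - F₁‖ < c * eps)
    (u u' u'' : H) (hu : ‖u‖ = 1)
    (lam : ℝ) (heig : F₁ u = lam • u) (hlam : |lam| < c)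
    (V : Submodule ℝ H)
    (hdecomp : u = u' + u'')
    (hu' : u' ∈ V)
    (hu'' : ∀ v ∈ V, (inner ℝ u'' v : ℝ) = 0)
    (hFV : ∀ v ∈ V, F v ∈ V)
    (hFVperp : ∀ w : H, (∀ v ∈ V, (inner ℝ w v : ℝ) = 0) →
      (∀ v ∈ V, (inner ℝ (F w) v : ℝ) = 0))
    (hlower : ∀ w : H, (∀ v ∈ V, (inner ℝ w v : ℝ) = 0) → 3 * c * ‖w‖ ≤ ‖F w‖) :
    ‖u''‖ < eps / 2 := by
  set a : H := F u' - lam • u' with ha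
  set b : H := F u'' - lam • u'' with hb
  have haV : a ∈ V := V.sub_mem (hFV u' hu') (V.smul_mem lam hu')
  have hbperp : ∀ v ∈ V, (inner ℝ b v : ℝ) = 0 := by
    intro v hv
    rw [hb, inner_sub_left, inner_smul_left]
    rw [hFVperp u'' hu'' v hv, hu'' v hv]
    ring
  have hab : (inner ℝ a b : ℝ) = 0 := by
    rw [real_inner_comm]; exact hbperp a haV
  have hsum : F u - lam • u = a + b := by
    rw [hdecomp]; simp [ha, hb, smul_add]; abel
  have h1 : ‖F u - lam • u‖ < c * eps := by
    have : F u - lam • u = (F - F₁) u := by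
      simp [heig]
    rw [this]
    calc ‖(F - F₁) u‖ ≤ ‖F - F₁‖ * ‖u‖ := (F - F₁).le_opNorm u
      _ = ‖F - F₁‖ := by rw [hu, mul_one]
      _ < c * eps := hFF₁
  have hble : ‖b‖ ≤ ‖F u - lam • u‖ := by
    have h2 : ‖a + b‖ ^ 2 = ‖a‖ ^ 2 + ‖b‖ ^ 2 := by
      rw [← real_inner_self_eq_norm_sq, ← real_inner_self_eq_norm_sq,
        ← real_inner_self_eq_norm_sq, inner_add_add_self, hab, hbperp a haV]
      ring
    rw [hsum]
    nlinarith [sq_nonneg ‖a‖, norm_nonneg b, norm_nonneg (a + b)]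
  have h3 : 2 * c * ‖u''‖ ≤ ‖b‖ := by
    have hF : 3 * c * ‖u''‖ ≤ ‖F u''‖ := hlower u'' hu''
    have hl : ‖lam • u''‖ ≤ c * ‖u''‖ := by
      rw [norm_smul, Real.norm_eq_abs]
      exact mul_le_mul_of_nonneg_right hlam.le (norm_nonneg _)
    have ht : ‖F u''‖ ≤ ‖b‖ + ‖lam • u''‖ := by
      have : F u'' = b + lam • u'' := by rw [hb]; abel
      rw [this]; exact norm_add_le _ _
    linarith
  have : 2 * c * ‖u''‖ < c * eps := lt_of_le_of_lt (h3.trans hble) h1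
  nlinarith
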